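/- arXiv:2111.08368 — 2 statements merged into one kernel-verified Lean document; each statement's English description precedes it below -/
import Mathlib

section
/- Let d ≥ 1 and let f = (f1,f2) : ℂ² → ℂ² be a polynomial map whose components have degree d and whose leading homogeneous parts ĥf1, ĥf2 (the degree-d homogeneous components) have no common zero in ℂ² other than the origin. Then the monomials w^α (α ∈ ℕ²) are linearly independent as functions on the graph V = {(w,z) : w = f(z)}; equivalently, if p ∈ ℂ[w1,w2] satisfies p(f1(z), f2(z)) = 0 for all z ∈ ℂ², then p = 0. In particular the ℂ-algebra homomorphism ℂ[w1,w2] → ℂ[z1,z2], p(w) ↦ p(f(z)), is injective. -/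
noncomputable section

/-- Evaluation of a 2-variable polynomial at a point of `ℂ²`. -/
def pev (p : MvPolynomial (Fin 2) ℂ) (z : ℂ × ℂ) : ℂ :=
  MvPolynomial.eval ![z.1, z.2] p

/-- The coefficient of `z1^j z2^(d-j)` in `p`. -/
def coeffTop (d : ℕ) (p : MvPolynomial (Fin 2) ℂ) (j : ℕ) : ℂ :=
  MvPolynomial.coeff (Finsupp.single (0 : Fin 2) j + Finsupp.single (1 : Fin 2) (d - j)) p

/-- The degree-`d` homogeneous part of `p`, as a function on `ℂ²`. -/
def leadPart (d : ℕ) (p : MvPolynomial (Fin 2) ℂ) (z : ℂ × ℂ) : ℂ :=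
  ∑ j ∈ Finset.range (d + 1), coeffTop d p j * z.1 ^ j * z.2 ^ (d - j)

open MvPolynomial Finset

/-- index helper -/
def eIdx (i j : ℕ) : Fin 2 →₀ ℕ := Finsupp.single 0 i + Finsupp.single 1 j

lemma eIdx_zero (i j : ℕ) : eIdx i j 0 = i := by
  simp [eIdx, Finsupp.single_apply]

lemma eIdx_one (i j : ℕ) : eIdx i j 1 = j := by
  simp [eIdx, Finsupp.single_apply]

lemma eq_eIdx (s : Fin 2 →₀ ℕ) : s = eIdx (s 0) (s 1) := by
  ext i
  fin_cases i
  · simp [eIdx_zero]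
  · simp [eIdx_one]

lemma degsum (s : Fin 2 →₀ ℕ) : (s.sum fun _ e => e) = s 0 + s 1 := by
  rw [Finsupp.sum_fintype _ _ (fun _ => rfl), Fin.sum_univ_two]

lemma coeffTop_def (D : ℕ) (p : MvPolynomial (Fin 2) ℂ) (j : ℕ) :
    coeffTop D p j = MvPolynomial.coeff (eIdx j (D - j)) p := rfl

lemma key_sum (p : MvPolynomial (Fin 2) ℂ) (D : ℕ) (a b : ℂ) :
    (∑ s ∈ p.support,
      if s 0 + s 1 = D then MvPolynomial.coeff s p * a ^ (s 0) * b ^ (s 1) else 0)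
      = ∑ j ∈ Finset.range (D + 1), coeffTop D p j * a ^ j * b ^ (D - j) := by
  classical
  rw [← Finset.sum_filter]
  set T : Finset (Fin 2 →₀ ℕ) := (Finset.range (D + 1)).image (fun j => eIdx j (D - j)) with hT
  have hsub : p.support.filter (fun s => s 0 + s 1 = D) ⊆ T := by
    intro s hs
    rw [Finset.mem_filter] at hs
    rw [hT, Finset.mem_image]
    refine ⟨s 0, Finset.mem_range.2 (by omega), ?_⟩
    have h1 : D - s 0 = s 1 := by omega
    rw [h1]
    exact (eq_eIdx s).symm
  rw [Finset.sum_subset hsub ?h0]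
  case h0 =>
    intro s hsT hs
    rw [hT, Finset.mem_image] at hsT
    obtain ⟨j, hj, rfl⟩ := hsT
    rw [Finset.mem_range, Nat.lt_succ_iff] at hj
    have hdeg : eIdx j (D - j) 0 + eIdx j (D - j) 1 = D := by
      rw [eIdx_zero, eIdx_one]; omega
    have : eIdx j (D - j) ∉ p.support := by
      intro hmem
      exact hs (Finset.mem_filter.2 ⟨hmem, hdeg⟩)
    rw [MvPolynomial.notMem_support_iff] at this
    rw [this, zero_mul, zero_mul]
  rw [hT, Finset.sum_image ?inj]
  case inj =>
    intro x _ y _ hxy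
    have := congrArg (fun s => s 0) hxy
    simpa [eIdx_zero] using this
  refine Finset.sum_congr rfl fun j hj => ?_
  rw [coeffTop_def, eIdx_zero, eIdx_one]

lemma eval_eval₂ (g : Fin 2 → Polynomial ℂ) (p : MvPolynomial (Fin 2) ℂ) (t : ℂ) :
    Polynomial.eval t (MvPolynomial.eval₂ Polynomial.C g p)
      = MvPolynomial.eval (fun i => (g i).eval t) p := by
  have h := MvPolynomial.eval₂_comp_left (Polynomial.evalRingHom t)
      (Polynomial.C : ℂ →+* Polynomial ℂ) g p
  have h2 : (Polynomial.evalRingHom t).comp (Polynomial.C : ℂ →+* Polynomial ℂ)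
      = RingHom.id ℂ := by ext x; simp
  rw [h2] at h
  simpa [MvPolynomial.eval₂_id, Function.comp_def] using h

def scaledP (p : MvPolynomial (Fin 2) ℂ) (z : ℂ × ℂ) : Polynomial ℂ :=
  MvPolynomial.eval₂ Polynomial.C
    ![Polynomial.C z.1 * Polynomial.X, Polynomial.C z.2 * Polynomial.X] p

lemma eval_scaledP (p : MvPolynomial (Fin 2) ℂ) (z : ℂ × ℂ) (t : ℂ) :
    (scaledP p z).eval t = MvPolynomial.eval ![t * z.1, t * z.2] p := by
  rw [scaledP, eval_eval₂]
  have hv : (fun i => Polynomial.eval t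
      (![Polynomial.C z.1 * Polynomial.X, Polynomial.C z.2 * Polynomial.X] i))
      = ![t * z.1, t * z.2] := by
    funext i
    fin_cases i <;>
      simp only [Matrix.cons_val_zero, Matrix.cons_val_one, Matrix.head_cons, Fin.mk_zero,
        Fin.mk_one, Polynomial.eval_mul, Polynomial.eval_C, Polynomial.eval_X] <;> ring
  rw [hv]

lemma coeff_scaledP (p : MvPolynomial (Fin 2) ℂ) (z : ℂ × ℂ) (D : ℕ) :
    (scaledP p z).coeff D = leadPart D p z := by
  rw [scaledP, MvPolynomial.eval₂_eq', Polynomial.finset_sum_coeff, leadPart,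
    ← key_sum p D z.1 z.2]
  refine Finset.sum_congr rfl fun s _ => ?_
  rw [Fin.prod_univ_two]
  simp only [Matrix.cons_val_zero, Matrix.cons_val_one, Matrix.head_cons]
  have hterm : Polynomial.C (MvPolynomial.coeff s p) *
      ((Polynomial.C z.1 * Polynomial.X) ^ (s 0) * (Polynomial.C z.2 * Polynomial.X) ^ (s 1))
      = Polynomial.C (MvPolynomial.coeff s p * z.1 ^ (s 0) * z.2 ^ (s 1)) *
        Polynomial.X ^ (s 0 + s 1) := by
    rw [mul_pow, mul_pow, ← Polynomial.C_pow, ← Polynomial.C_pow, Polynomial.C_mul,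
      Polynomial.C_mul]
    ring
  rw [hterm, Polynomial.coeff_C_mul, Polynomial.coeff_X_pow]
  by_cases h : s 0 + s 1 = D
  · rw [if_pos h, if_pos h.symm, mul_one]
  · rw [if_neg h, if_neg (fun hh => h hh.symm), mul_zero]

lemma coeffTop_eq_zero (p : MvPolynomial (Fin 2) ℂ) {D j : ℕ} (hj : j ≤ D)
    (hD : p.totalDegree < D) : coeffTop D p j = 0 := by
  rw [coeffTop_def]
  rw [← MvPolynomial.notMem_support_iff]
  intro hmem
  have := MvPolynomial.le_totalDegree hmem
  rw [degsum, eIdx_zero, eIdx_one] at this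
  omega

lemma natDegree_scaledP (p : MvPolynomial (Fin 2) ℂ) (z : ℂ × ℂ) :
    (scaledP p z).natDegree ≤ p.totalDegree := by
  refine Polynomial.natDegree_le_iff_coeff_eq_zero.2 fun D hD => ?_
  rw [coeff_scaledP, leadPart]
  refine Finset.sum_eq_zero fun j hj => ?_
  rw [coeffTop_eq_zero p (Nat.lt_succ_iff.1 (Finset.mem_range.1 hj)) hD, zero_mul, zero_mul]

lemma coeffQ (c : ℕ → ℂ) (D i : ℕ) (hi : i ≤ D) :
    (∑ j ∈ Finset.range (D + 1), Polynomial.C (c j) * Polynomial.X ^ j).coeff i = c i := by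
  rw [Polynomial.finset_sum_coeff]
  simp only [Polynomial.coeff_C_mul, Polynomial.coeff_X_pow, mul_ite, mul_one, mul_zero]
  rw [Finset.sum_ite_eq (Finset.range (D + 1)) i c, if_pos (Finset.mem_range.2 (by omega))]

lemma exists_nontrivial_zero (c : ℕ → ℂ) (D : ℕ) (hD : 1 ≤ D) :
    ∃ z : ℂ × ℂ, z ≠ 0 ∧ ∑ j ∈ Finset.range (D + 1), c j * z.1 ^ j * z.2 ^ (D - j) = 0 := by
  by_cases hcD : c D = 0
  · refine ⟨(1, 0), by simp [Prod.ext_iff], ?_⟩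
    rw [Finset.sum_eq_single D]
    · simpa using hcD
    · intro j hj hne
      have hjD : j < D := lt_of_le_of_ne (Nat.lt_succ_iff.1 (Finset.mem_range.1 hj)) hne
      have : ((1 : ℂ), (0 : ℂ)).2 ^ (D - j) = 0 := zero_pow (Nat.sub_ne_zero_of_lt hjD)
      rw [this, mul_zero]
    · intro h; exact absurd (Finset.self_mem_range_succ D) h
  · set Q : Polynomial ℂ := ∑ j ∈ Finset.range (D + 1), Polynomial.C (c j) * Polynomial.X ^ j
      with hQ
    have hdeg : D ≤ Q.natDegree := by
      apply Polynomial.le_natDegree_of_ne_zero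
      rw [hQ, coeffQ c D D le_rfl]
      exact hcD
    have hdpos : 0 < Q.degree := Polynomial.natDegree_pos_iff_degree_pos.1 (by omega)
    obtain ⟨r, hr⟩ := Complex.exists_root hdpos
    refine ⟨(r, 1), by simp [Prod.ext_iff], ?_⟩
    have : ∑ j ∈ Finset.range (D + 1), c j * r ^ j = 0 := by
      have := hr
      rw [Polynomial.IsRoot, hQ, Polynomial.eval_finset_sum] at this
      simpa using this
    simpa using this

lemma not_both (d : ℕ) (hd : 1 ≤ d) (f1 f2 : MvPolynomial (Fin 2) ℂ)
    (hreg : ∀ z : ℂ × ℂ, leadPart d f1 z = 0 → leadPart d f2 z = 0 → z = 0)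
    (a b : ℂ) (hab : a ≠ 0 ∨ b ≠ 0)
    (h : ∀ z : ℂ × ℂ, a * leadPart d f1 z + b * leadPart d f2 z = 0) : False := by
  by_cases ha : a = 0
  · have hb : b ≠ 0 := hab.resolve_left (by simp [ha])
    have hv : ∀ z : ℂ × ℂ, leadPart d f2 z = 0 := by
      intro z
      have := h z
      rw [ha, zero_mul, zero_add] at this
      exact (mul_eq_zero.1 this).resolve_left hb
    obtain ⟨z0, hz0, hz0v⟩ := exists_nontrivial_zero (coeffTop d f1) d hd
    have hu : leadPart d f1 z0 = 0 := hz0v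
    exact hz0 (hreg z0 hu (hv z0))
  · obtain ⟨z0, hz0, hz0v⟩ := exists_nontrivial_zero (coeffTop d f2) d hd
    have hv : leadPart d f2 z0 = 0 := hz0v
    have hu : leadPart d f1 z0 = 0 := by
      have := h z0
      rw [hv, mul_zero, add_zero] at this
      exact (mul_eq_zero.1 this).resolve_left ha
    exact hz0 (hreg z0 hu hv)

lemma core (d : ℕ) (hd : 1 ≤ d) (f1 f2 : MvPolynomial (Fin 2) ℂ)
    (hdeg1 : f1.totalDegree = d) (hdeg2 : f2.totalDegree = d)
    (hreg : ∀ z : ℂ × ℂ, leadPart d f1 z = 0 → leadPart d f2 z = 0 → z = 0)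
    (p : MvPolynomial (Fin 2) ℂ)
    (hp : ∀ z : ℂ × ℂ, MvPolynomial.eval ![pev f1 z, pev f2 z] p = 0) : p = 0 := by
  classical
  by_contra hp0
  set m := p.totalDegree with hm
  have hA1 : ∀ z : ℂ × ℂ, ∑ j ∈ Finset.range (m + 1),
      coeffTop m p j * (leadPart d f1 z) ^ j * (leadPart d f2 z) ^ (m - j) = 0 := by
    intro z
    have hT : MvPolynomial.eval₂ Polynomial.C ![scaledP f1 z, scaledP f2 z] p = 0 := by
      apply Polynomial.funext
      intro t
      rw [Polynomial.eval_zero, eval_eval₂]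
      have hv : (fun i => (![scaledP f1 z, scaledP f2 z] i).eval t)
          = ![pev f1 (t * z.1, t * z.2), pev f2 (t * z.1, t * z.2)] := by
        funext i
        fin_cases i <;>
          simp only [Matrix.cons_val_zero, Matrix.cons_val_one, Matrix.head_cons, Fin.mk_zero,
            Fin.mk_one] <;> rw [eval_scaledP] <;> rfl
      rw [hv]
      exact hp (t * z.1, t * z.2)
    have hco := congrArg (fun Q : Polynomial ℂ => Q.coeff (m * d)) hT
    simp only [Polynomial.coeff_zero] at hco
    rw [MvPolynomial.eval₂_eq', Polynomial.finset_sum_coeff] at hco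
    have hterm : ∀ s ∈ p.support,
        (Polynomial.C (MvPolynomial.coeff s p) *
          ∏ i, (![scaledP f1 z, scaledP f2 z] i) ^ s i).coeff (m * d)
        = if s 0 + s 1 = m then
            MvPolynomial.coeff s p * (leadPart d f1 z) ^ (s 0) * (leadPart d f2 z) ^ (s 1)
          else 0 := by
      intro s hs
      rw [Fin.prod_univ_two]
      simp only [Matrix.cons_val_zero, Matrix.cons_val_one, Matrix.head_cons]
      have hA : (scaledP f1 z).natDegree ≤ d := hdeg1 ▸ natDegree_scaledP f1 z
      have hB : (scaledP f2 z).natDegree ≤ d := hdeg2 ▸ natDegree_scaledP f2 z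
      have hsm : s 0 + s 1 ≤ m := by
        have := MvPolynomial.le_totalDegree hs
        rwa [degsum] at this
      by_cases h : s 0 + s 1 = m
      · rw [if_pos h]
        have h1 : m * d = s 0 * d + s 1 * d := by rw [← h]; ring
        rw [Polynomial.coeff_C_mul, h1,
          Polynomial.coeff_mul_add_eq_of_natDegree_le
            (Polynomial.natDegree_pow_le.trans (Nat.mul_le_mul_left _ hA))
            (Polynomial.natDegree_pow_le.trans (Nat.mul_le_mul_left _ hB)),
          Polynomial.coeff_pow_of_natDegree_le hA, Polynomial.coeff_pow_of_natDegree_le hB,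
          coeff_scaledP, coeff_scaledP, mul_assoc]
      · rw [if_neg h]
        have hlt : s 0 + s 1 < m := lt_of_le_of_ne hsm h
        apply Polynomial.coeff_eq_zero_of_natDegree_lt
        calc (Polynomial.C (MvPolynomial.coeff s p) *
              ((scaledP f1 z) ^ s 0 * (scaledP f2 z) ^ s 1)).natDegree
            ≤ ((scaledP f1 z) ^ s 0 * (scaledP f2 z) ^ s 1).natDegree :=
              Polynomial.natDegree_C_mul_le _ _
          _ ≤ ((scaledP f1 z) ^ s 0).natDegree + ((scaledP f2 z) ^ s 1).natDegree :=
              Polynomial.natDegree_mul_le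
          _ ≤ s 0 * d + s 1 * d := add_le_add
              (Polynomial.natDegree_pow_le.trans (Nat.mul_le_mul_left _ hA))
              (Polynomial.natDegree_pow_le.trans (Nat.mul_le_mul_left _ hB))
          _ = (s 0 + s 1) * d := by ring
          _ < m * d := by
              have hd0 : 0 < d := hd
              exact Nat.mul_lt_mul_of_lt_of_le hlt le_rfl hd0
    rw [Finset.sum_congr rfl hterm, key_sum] at hco
    exact hco
  -- a nonzero top coefficient
  obtain ⟨s, hsmem, hsdeg⟩ := p.support.exists_mem_eq_sup
    (MvPolynomial.support_nonempty.2 hp0) (fun s => s.sum fun _ e => e)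
  have hsd2 : s 0 + s 1 = m := by
    rw [← degsum, ← hsdeg]
    rfl
  have hs0le : s 0 ≤ m := by omega
  have hcs : coeffTop m p (s 0) ≠ 0 := by
    rw [coeffTop_def]
    have h1 : eIdx (s 0) (m - s 0) = s := by
      rw [show m - s 0 = s 1 by omega]
      exact (eq_eIdx s).symm
    rw [h1]
    exact MvPolynomial.mem_support_iff.1 hsmem
  rcases Nat.eq_zero_or_pos m with hm0 | hm1
  · -- m = 0 : contradiction directly
    have h0 := hA1 0
    rw [hm0] at h0
    rw [Finset.sum_range_one] at h0
    simp only [pow_zero, Nat.zero_sub, mul_one] at h0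
    rw [show s 0 = 0 by omega, hm0] at hcs
    exact hcs h0
  · -- m ≥ 1
    set Q : Polynomial ℂ := ∑ j ∈ Finset.range (m + 1),
        Polynomial.C (coeffTop m p j) * Polynomial.X ^ j with hQdef
    have hQne : Q ≠ 0 := by
      intro h
      apply hcs
      rw [← coeffQ (coeffTop m p) m (s 0) hs0le, ← hQdef, h, Polynomial.coeff_zero]
    have hcne : Q.leadingCoeff ≠ 0 := Polynomial.leadingCoeff_ne_zero.2 hQne
    have hsplit : Q.Splits := IsAlgClosed.splits Q
    have hQfact : Q = Polynomial.C Q.leadingCoeff *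
        (Q.roots.map fun r => Polynomial.X - Polynomial.C r).prod :=
      hsplit.eq_prod_roots
    have hcard : Q.natDegree = Multiset.card Q.roots := by
      exact hsplit.natDegree_eq_card_roots
    set k := Multiset.card Q.roots with hk
    set U : MvPolynomial (Fin 2) ℂ := ∑ j ∈ Finset.range (d + 1),
        MvPolynomial.monomial (eIdx j (d - j)) (coeffTop d f1 j) with hUdef
    set V : MvPolynomial (Fin 2) ℂ := ∑ j ∈ Finset.range (d + 1),
        MvPolynomial.monomial (eIdx j (d - j)) (coeffTop d f2 j) with hVdef
    have hmono : ∀ (g : MvPolynomial (Fin 2) ℂ) (x : Fin 2 → ℂ),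
        MvPolynomial.eval x (∑ j ∈ Finset.range (d + 1),
          MvPolynomial.monomial (eIdx j (d - j)) (coeffTop d g j))
        = leadPart d g (x 0, x 1) := by
      intro g x
      rw [map_sum, leadPart]
      refine Finset.sum_congr rfl fun j hj => ?_
      rw [MvPolynomial.eval_monomial]
      rw [Finsupp.prod_fintype _ _ (fun i => pow_zero (x i)), Fin.prod_univ_two,
        eIdx_zero, eIdx_one, mul_assoc]
    have hUe : ∀ x : Fin 2 → ℂ, MvPolynomial.eval x U = leadPart d f1 (x 0, x 1) :=
      fun x => hmono f1 x
    have hVe : ∀ x : Fin 2 → ℂ, MvPolynomial.eval x V = leadPart d f2 (x 0, x 1) :=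
      fun x => hmono f2 x
    set W : MvPolynomial (Fin 2) ℂ := ∑ j ∈ Finset.range (m + 1),
        MvPolynomial.C (coeffTop m p j) * U ^ j * V ^ (m - j) with hWdef
    have hWe : ∀ x : Fin 2 → ℂ, MvPolynomial.eval x W
        = ∑ j ∈ Finset.range (m + 1), coeffTop m p j *
            (MvPolynomial.eval x U) ^ j * (MvPolynomial.eval x V) ^ (m - j) := by
      intro x
      rw [hWdef, map_sum]
      refine Finset.sum_congr rfl fun j hj => ?_
      rw [map_mul, map_mul, map_pow, map_pow, MvPolynomial.eval_C]
    have hW0 : W = 0 := by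
      apply MvPolynomial.funext
      intro x
      rw [map_zero, hWe, hUe, hVe]
      exact hA1 (x 0, x 1)
    -- the factorization identity
    have hPP : V ^ k * W = V ^ m * MvPolynomial.C Q.leadingCoeff *
        (Q.roots.map fun r => U - MvPolynomial.C r * V).prod := by
      apply MvPolynomial.funext
      intro x
      have hrhs : MvPolynomial.eval x (V ^ m * MvPolynomial.C Q.leadingCoeff *
          (Q.roots.map fun r => U - MvPolynomial.C r * V).prod)
          = (MvPolynomial.eval x V) ^ m * Q.leadingCoeff *
            (Q.roots.map fun r =>
              MvPolynomial.eval x U - r * MvPolynomial.eval x V).prod := by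
        rw [map_mul, map_mul, map_pow, MvPolynomial.eval_C, map_multiset_prod,
          Multiset.map_map]
        congr 2
        apply Multiset.map_congr rfl
        intro r _
        simp only [Function.comp_apply, map_sub, map_mul, MvPolynomial.eval_C]
      rw [map_mul, map_pow, hWe, hrhs]
      set a := MvPolynomial.eval x U with ha
      set b := MvPolynomial.eval x V with hb
      by_cases hbz : b = 0
      · -- b = 0
        rw [hbz]
        have hsum : (∑ j ∈ Finset.range (m + 1),
            coeffTop m p j * a ^ j * (0:ℂ) ^ (m - j)) = coeffTop m p m * a ^ m := by
          rw [Finset.sum_eq_single_of_mem m (Finset.self_mem_range_succ m)]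
          · rw [Nat.sub_self, pow_zero, mul_one]
          · intro j hj hne
            have hjm : j < m := lt_of_le_of_ne (Nat.lt_succ_iff.1 (Finset.mem_range.1 hj)) hne
            rw [zero_pow (Nat.sub_ne_zero_of_lt hjm), mul_zero]
        rw [hsum, zero_pow (by omega : m ≠ 0), zero_mul, zero_mul]
        rcases Nat.eq_zero_or_pos k with hk0 | hk1
        · have hQC : Q = Polynomial.C (Q.coeff 0) :=
            Polynomial.eq_C_of_natDegree_eq_zero (by omega)
          have hccm : coeffTop m p m = 0 := by
            have hq := coeffQ (coeffTop m p) m m le_rfl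
            rw [← hQdef] at hq
            rw [← hq, hQC, Polynomial.coeff_C, if_neg (by omega : ¬ m = 0)]
          rw [hccm, zero_mul, mul_zero]
        · rw [zero_pow (by omega : k ≠ 0), zero_mul]
      · -- b ≠ 0
        have hsum : (∑ j ∈ Finset.range (m + 1), coeffTop m p j * a ^ j * b ^ (m - j))
            = b ^ m * ∑ j ∈ Finset.range (m + 1), coeffTop m p j * (a / b) ^ j := by
          rw [Finset.mul_sum]
          refine Finset.sum_congr rfl fun j hj => ?_
          have hjm : j ≤ m := Nat.lt_succ_iff.1 (Finset.mem_range.1 hj)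
          have hbm : b ^ m = b ^ (m - j) * b ^ j := by
            rw [← pow_add, Nat.sub_add_cancel hjm]
          rw [div_pow, hbm]
          field_simp
        have hQe : Q.eval (a / b)
            = ∑ j ∈ Finset.range (m + 1), coeffTop m p j * (a / b) ^ j := by
          rw [hQdef, Polynomial.eval_finset_sum]
          simp
        have hQr : Q.eval (a / b)
            = Q.leadingCoeff * (Q.roots.map fun r => a / b - r).prod := by
          conv_lhs => rw [hQfact]
          rw [Polynomial.eval_mul, Polynomial.eval_C, Polynomial.eval_multiset_prod,
            Multiset.map_map]
          congr 2
          apply Multiset.map_congr rfl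
          intro r _
          simp
        have hmap : (Q.roots.map fun r => a - r * b)
            = Q.roots.map fun r => b * (a / b - r) := by
          apply Multiset.map_congr rfl
          intro r _
          field_simp
        have hprod : (Q.roots.map fun r => b * (a / b - r)).prod
            = b ^ k * (Q.roots.map fun r => a / b - r).prod := by
          have : (fun r : ℂ => b * (a / b - r))
              = fun r => (fun _ : ℂ => b) r * (fun r => a / b - r) r := rfl
          rw [this, Multiset.prod_map_mul, Multiset.map_const', Multiset.prod_replicate, hk]
        have hcP : Q.leadingCoeff * (Q.roots.map fun r => a / b - r).prod
            = ∑ j ∈ Finset.range (m + 1), coeffTop m p j * (a / b) ^ j :=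
          hQr.symm.trans hQe
        rw [hsum, hmap, hprod, ← hcP]
        ring
    have hzero : V ^ m * MvPolynomial.C Q.leadingCoeff *
        (Q.roots.map fun r => U - MvPolynomial.C r * V).prod = 0 := by
      rw [← hPP, hW0, mul_zero]
    rcases mul_eq_zero.1 hzero with h1 | h2
    · rcases mul_eq_zero.1 h1 with h3 | h4
      · have hV0 : V = 0 := pow_eq_zero_iff (by omega : m ≠ 0) |>.1 h3
        refine not_both d hd f1 f2 hreg 0 1 (Or.inr one_ne_zero) fun z => ?_
        have hv := hVe ![z.1, z.2]
        rw [hV0, map_zero] at hv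
        simp only [Matrix.cons_val_zero, Matrix.cons_val_one, Matrix.head_cons] at hv
        rw [Prod.mk.eta] at hv
        rw [zero_mul, zero_add, one_mul, ← hv]
      · exact absurd (by simpa using h4) hcne
    · obtain ⟨y, hy, hy0⟩ := Multiset.mem_map.1 (Multiset.prod_eq_zero_iff.1 h2)
      refine not_both d hd f1 f2 hreg 1 (-y) (Or.inl one_ne_zero) fun z => ?_
      have hz := congrArg (MvPolynomial.eval ![z.1, z.2]) hy0
      rw [map_sub, map_mul, MvPolynomial.eval_C, map_zero] at hz
      have hu := hUe ![z.1, z.2]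
      have hv := hVe ![z.1, z.2]
      simp only [Matrix.cons_val_zero, Matrix.cons_val_one, Matrix.head_cons] at hu hv
      rw [Prod.mk.eta] at hu hv
      rw [one_mul, ← hu, ← hv]
      linear_combination hz

lemma eval_bind (g : Fin 2 → MvPolynomial (Fin 2) ℂ) (p : MvPolynomial (Fin 2) ℂ)
    (x : Fin 2 → ℂ) :
    MvPolynomial.eval x (MvPolynomial.bind₁ g p)
      = MvPolynomial.eval (fun i => MvPolynomial.eval x (g i)) p := by
  have h := MvPolynomial.aeval_bind₁ (R := ℂ) (S := ℂ) x g p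
  simpa [MvPolynomial.aeval_def, MvPolynomial.eval₂_id] using h

/-- If `f = (f1, f2)` is a regular polynomial map of degree `d ≥ 1`, then the monomials
`w^α` are linearly independent as functions on the graph `V = {(w,z) : w = f(z)}`;
equivalently, `p(f1(z), f2(z)) = 0` for all `z` implies `p = 0`; in particular the
`ℂ`-algebra homomorphism `ℂ[w1,w2] → ℂ[z1,z2]`, `p(w) ↦ p(f(z))`, is injective. -/
theorem monomials_in_w_linearIndependent (d : ℕ) (hd : 1 ≤ d)
    (f1 f2 : MvPolynomial (Fin 2) ℂ)
    (hdeg1 : f1.totalDegree = d) (hdeg2 : f2.totalDegree = d)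
    (hreg : ∀ z : ℂ × ℂ, leadPart d f1 z = 0 → leadPart d f2 z = 0 → z = 0) :
    LinearIndependent ℂ
        (fun α : ℕ × ℕ => fun z : ℂ × ℂ => pev f1 z ^ α.1 * pev f2 z ^ α.2) ∧
      (∀ p : MvPolynomial (Fin 2) ℂ,
        (∀ z : ℂ × ℂ, MvPolynomial.eval ![pev f1 z, pev f2 z] p = 0) → p = 0) ∧
      Function.Injective
        (fun p : MvPolynomial (Fin 2) ℂ => MvPolynomial.bind₁ ![f1, f2] p) := by
  classical
  have hcore := core d hd f1 f2 hdeg1 hdeg2 hreg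
  refine ⟨?_, hcore, ?_⟩
  · rw [linearIndependent_iff]
    intro l hl
    set P : MvPolynomial (Fin 2) ℂ :=
      ∑ α ∈ l.support, MvPolynomial.monomial (eIdx α.1 α.2) (l α) with hPdef
    have hPz : ∀ z : ℂ × ℂ, MvPolynomial.eval ![pev f1 z, pev f2 z] P = 0 := by
      intro z
      have hlz := congrFun hl z
      rw [Finsupp.linearCombination_apply, Finsupp.sum] at hlz
      have hlz2 : (∑ α ∈ l.support,
          l α • fun z : ℂ × ℂ => pev f1 z ^ α.1 * pev f2 z ^ α.2) z = 0 := hlz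
      rw [Finset.sum_apply] at hlz2
      rw [hPdef, map_sum]
      rw [← hlz2]
      refine Finset.sum_congr rfl fun α _ => ?_
      rw [MvPolynomial.eval_monomial]
      rw [Finsupp.prod_fintype _ _ (fun i => pow_zero _), Fin.prod_univ_two,
        eIdx_zero, eIdx_one]
      simp only [Matrix.cons_val_zero, Matrix.cons_val_one, Matrix.head_cons,
        Pi.smul_apply, smul_eq_mul]
    have hP0 : P = 0 := hcore P hPz
    ext β
    rw [Finsupp.coe_zero, Pi.zero_apply]
    by_cases hβ : β ∈ l.support
    · have hc := congrArg (MvPolynomial.coeff (eIdx β.1 β.2)) hP0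
      rw [hPdef, MvPolynomial.coeff_sum, MvPolynomial.coeff_zero] at hc
      rw [← hc, Finset.sum_eq_single_of_mem β hβ]
      · rw [MvPolynomial.coeff_monomial, if_pos rfl]
      · intro α hα hne
        rw [MvPolynomial.coeff_monomial, if_neg]
        intro he
        apply hne
        have h0 := congrArg (fun s : Fin 2 →₀ ℕ => s 0) he
        have h1 := congrArg (fun s : Fin 2 →₀ ℕ => s 1) he
        simp only [eIdx_zero, eIdx_one] at h0 h1
        exact Prod.ext h0 h1
    · exact Finsupp.notMem_support_iff.1 hβ
  · intro p q h
    have hpq : ∀ z : ℂ × ℂ, MvPolynomial.eval ![pev f1 z, pev f2 z] (p - q) = 0 := by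
      intro z
      have hb : ∀ r : MvPolynomial (Fin 2) ℂ,
          MvPolynomial.eval ![pev f1 z, pev f2 z] r
            = MvPolynomial.eval ![z.1, z.2] (MvPolynomial.bind₁ ![f1, f2] r) := by
        intro r
        rw [eval_bind]
        have hv : (fun i => MvPolynomial.eval ![z.1, z.2] (![f1, f2] i))
            = ![pev f1 z, pev f2 z] := by
          funext i
          fin_cases i <;> rfl
        rw [hv]
      have h' : MvPolynomial.bind₁ ![f1, f2] p = MvPolynomial.bind₁ ![f1, f2] q := h
      rw [map_sub, hb p, hb q, h', sub_self]
    have := hcore (p - q) hpq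
    exact sub_eq_zero.1 this
    

end
end

section
/- Let X be a topological space, let e_1, …, e_n : X → ℂ be continuous functions, and let K ⊂ X be a nonempty compact set. For 1 ≤ m ≤ n define Van_m(K) = max{|det[e_i(ζ_j)]_{i,j=1}^m| : ζ_1, …, ζ_m ∈ K}, and define the Chebyshev-type constant t_n(K) = inf{‖e_n + q‖_K : q ∈ span_ℂ(e_1, …, e_{n−1})}, where ‖u‖_K = sup_{ζ∈K}|u(ζ)|. If Van_{n−1}(K) > 0, then t_n(K) · Van_{n−1}(K) ≤ Van_n(K) ≤ n · t_n(K) · Van_{n−1}(K). -/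
noncomputable section

/-- `Van_m(K)` for a family of functions `e 0, e 1, …` : the supremum of the moduli of the
`m × m` Vandermonde-type determinants `det [e i (ζ j)]` with `ζ_j ∈ K`. -/
def vanFam {X : Type*} (e : ℕ → X → ℂ) (K : Set X) (m : ℕ) : ℝ :=
  sSup {x | ∃ ζ : Fin m → X, (∀ i, ζ i ∈ K) ∧
    x = ‖Matrix.det (Matrix.of fun i j : Fin m => e (i : ℕ) (ζ j))‖}

/-- The Chebyshev-type constant `t_n(K) = inf ‖e_n + q‖_K`, `q ∈ span(e_1, …, e_{n-1})`
(here the functions are indexed `e 0, …, e (n-1)`). -/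
def chebFam {X : Type*} (e : ℕ → X → ℂ) (K : Set X) (n : ℕ) : ℝ :=
  sInf {x | ∃ c : ℕ → ℂ,
    x = sSup {y | ∃ ζ ∈ K,
      y = ‖e (n - 1) ζ + ∑ i ∈ Finset.range (n - 1), c i * e i ζ‖}}

lemma van_aux {X : Type*} [TopologicalSpace X] (e : ℕ → X → ℂ) (K : Set X)
    (hK : IsCompact K) (hne : K.Nonempty) (m : ℕ) (he : ∀ i < m, Continuous (e i)) :
    BddAbove {x | ∃ ζ : Fin m → X, (∀ i, ζ i ∈ K) ∧
        x = ‖Matrix.det (Matrix.of fun i j : Fin m => e (i : ℕ) (ζ j))‖} ∧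
      ∃ ζ : Fin m → X, (∀ i, ζ i ∈ K) ∧
        ‖Matrix.det (Matrix.of fun i j : Fin m => e (i : ℕ) (ζ j))‖ = vanFam e K m := by
  set g : (Fin m → X) → ℝ :=
    fun ζ => ‖Matrix.det (Matrix.of fun i j : Fin m => e (i : ℕ) (ζ j))‖ with hg
  have hgc : Continuous g := by
    apply continuous_norm.comp
    apply Continuous.matrix_det
    apply continuous_matrix
    intro i j
    exact (he i i.2).comp (continuous_apply j)
  set P : Set (Fin m → X) := Set.univ.pi fun _ => K with hP
  have hPc : IsCompact P := isCompact_univ_pi fun _ => hK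
  have hPne : P.Nonempty := ⟨fun _ => hne.choose, fun i _ => hne.choose_spec⟩
  obtain ⟨ζ0, hζ0, hmax⟩ := hPc.exists_isMaxOn hPne hgc.continuousOn
  have hset : {x | ∃ ζ : Fin m → X, (∀ i, ζ i ∈ K) ∧
      x = ‖Matrix.det (Matrix.of fun i j : Fin m => e (i : ℕ) (ζ j))‖} = g '' P := by
    ext x
    constructor
    · rintro ⟨ζ, hζ, rfl⟩
      exact ⟨ζ, fun i _ => hζ i, rfl⟩
    · rintro ⟨ζ, hζ, rfl⟩
      exact ⟨ζ, fun i => hζ i (Set.mem_univ i), rfl⟩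
  have hgr : IsGreatest (g '' P) (g ζ0) :=
    ⟨⟨ζ0, hζ0, rfl⟩, by rintro x ⟨ζ, hζ, rfl⟩; exact hmax hζ⟩
  have hveq : vanFam e K m = g ζ0 := by
    rw [vanFam, hset]; exact hgr.csSup_eq
  refine ⟨?_, ζ0, fun i => hζ0 i (Set.mem_univ i), hveq.symm⟩
  rw [hset]; exact hgr.bddAbove

lemma cheb_aux {X : Type*} [TopologicalSpace X] {K : Set X} (hK : IsCompact K)
    {p : X → ℂ} (hp : Continuous p) :
    BddAbove {y | ∃ ζ ∈ K, y = ‖p ζ‖} := by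
  have h : {y | ∃ ζ ∈ K, y = ‖p ζ‖} = (fun ζ => ‖p ζ‖) '' K := by
    ext y; simp [eq_comm]
  rw [h]
  exact hK.bddAbove_image (continuous_norm.comp hp).continuousOn

/-- The Vandermonde–Chebyshev ratio inequality: if `Van_{n-1}(K) > 0` then
`t_n(K) · Van_{n-1}(K) ≤ Van_n(K) ≤ n · t_n(K) · Van_{n-1}(K)`. -/
theorem vandermonde_chebyshev_ratio {X : Type*} [TopologicalSpace X]
    (n : ℕ) (hn : 1 ≤ n) (e : ℕ → X → ℂ) (he : ∀ i < n, Continuous (e i))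
    (K : Set X) (hK : IsCompact K) (hne : K.Nonempty)
    (hpos : 0 < vanFam e K (n - 1)) :
    chebFam e K n * vanFam e K (n - 1) ≤ vanFam e K n ∧
      vanFam e K n ≤ (n : ℝ) * chebFam e K n * vanFam e K (n - 1) := by
  obtain ⟨m, rfl⟩ : ∃ m, n = m + 1 := ⟨n - 1, (Nat.succ_pred_eq_of_pos hn).symm⟩
  simp only [Nat.add_sub_cancel] at hpos ⊢
  obtain ⟨hSmbdd, ζs, hζs, hζsV⟩ := van_aux e K hK hne m (fun i hi => he i (by omega))
  obtain ⟨hSnbdd, ζn, hζn, -⟩ := van_aux e K hK hne (m + 1) he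
  set V := vanFam e K m with hV
  -- the Chebyshev set
  set T : Set ℝ := {x | ∃ c : ℕ → ℂ,
    x = sSup {y | ∃ ζ ∈ K,
      y = ‖e m ζ + ∑ i ∈ Finset.range m, c i * e i ζ‖}} with hTdef
  have hTcheb : chebFam e K (m + 1) = sInf T := rfl
  have hTne : T.Nonempty := ⟨_, 0, rfl⟩
  have hT0 : ∀ x ∈ T, (0:ℝ) ≤ x := by
    rintro x ⟨c, rfl⟩
    exact Real.sSup_nonneg (by rintro y ⟨ζ, hζ, rfl⟩; exact norm_nonneg _)
  have hTbdd : BddBelow T := ⟨0, hT0⟩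
  have hpc : ∀ c : ℕ → ℂ,
      Continuous fun z => e m z + ∑ i ∈ Finset.range m, c i * e i z := by
    intro c
    refine (he m (by omega)).add ?_
    refine continuous_finset_sum _ fun i hi => ?_
    exact continuous_const.mul (he i (by simp only [Finset.mem_range] at hi; omega))
  -- ===== Lower bound =====
  set D : ℂ := Matrix.det (Matrix.of fun i j : Fin m => e (i : ℕ) (ζs j)) with hD
  have hDabs : ‖D‖ = V := hζsV
  have hDne : D ≠ 0 := by
    intro h
    rw [h, norm_zero] at hDabs
    linarith
  set A : X → Matrix (Fin (m + 1)) (Fin (m + 1)) ℂ :=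
    fun z => Matrix.of fun i j : Fin (m + 1) => e (i : ℕ) ((Fin.snoc ζs z : Fin (m + 1) → X) j) with hA
  set w : Fin (m + 1) → ℂ := fun i =>
    (-1 : ℂ) ^ ((i : ℕ) + m) *
      Matrix.det (Matrix.of fun i' j' : Fin m => e ((i.succAbove i' : Fin (m + 1)) : ℕ) (ζs j'))
    with hw
  have hexp : ∀ z, Matrix.det (A z) = ∑ i : Fin (m + 1), w i * e (i : ℕ) z := by
    intro z
    rw [Matrix.det_succ_column (A z) (Fin.last m)]
    refine Finset.sum_congr rfl fun i _ => ?_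
    have h1 : A z i (Fin.last m) = e (i : ℕ) z := by
      simp [hA, Fin.snoc_last]
    have h2 : (A z).submatrix i.succAbove (Fin.last m).succAbove =
        Matrix.of fun i' j' : Fin m => e ((i.succAbove i' : Fin (m + 1)) : ℕ) (ζs j') := by
      ext i' j'
      simp [hA, Fin.succAbove_last, Fin.snoc_castSucc]
    rw [h1, h2, hw]
    simp only [Fin.val_last]
    ring
  have hwlast : w (Fin.last m) = D := by
    rw [hw]
    simp only [Fin.val_last, Fin.succAbove_last, Fin.coe_castSucc]
    rw [Even.neg_one_pow ⟨m, rfl⟩, one_mul, hD]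
  set cs : ℕ → ℂ := fun i => if h : i < m then w (Fin.castSucc ⟨i, h⟩) / D else 0 with hcs
  have hkey : ∀ z, D * (e m z + ∑ i ∈ Finset.range m, cs i * e i z) = Matrix.det (A z) := by
    intro z
    rw [hexp z, Fin.sum_univ_castSucc, hwlast]
    have h2 : ∑ i ∈ Finset.range m, cs i * e i z =
        ∑ i : Fin m, (w (Fin.castSucc i) / D) * e (i : ℕ) z := by
      rw [← Fin.sum_univ_eq_sum_range (fun i => cs i * e i z) m]
      refine Finset.sum_congr rfl fun i _ => ?_
      have : cs (i : ℕ) = w (Fin.castSucc i) / D := by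
        rw [hcs]; simp only [i.isLt, dif_pos]
      rw [this]
    rw [h2, mul_add, Finset.mul_sum]
    simp only [Fin.val_last, Fin.coe_castSucc]
    rw [add_comm]
    congr 1
    refine Finset.sum_congr rfl fun i _ => ?_
    field_simp
  have habs : ∀ z, ‖e m z + ∑ i ∈ Finset.range m, cs i * e i z‖ =
      ‖Matrix.det (A z)‖ / V := by
    intro z
    have h1 := congrArg norm (hkey z)
    rw [norm_mul, hDabs] at h1
    rw [eq_div_iff (ne_of_gt hpos)]
    linarith [h1]
  have hlow : chebFam e K (m + 1) * V ≤ vanFam e K (m + 1) := by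
    have hx : sSup {y | ∃ ζ ∈ K,
        y = ‖e m ζ + ∑ i ∈ Finset.range m, cs i * e i ζ‖} ∈ T := ⟨cs, rfl⟩
    have h1 : chebFam e K (m + 1) ≤ sSup {y | ∃ ζ ∈ K,
        y = ‖e m ζ + ∑ i ∈ Finset.range m, cs i * e i ζ‖} := by
      rw [hTcheb]; exact csInf_le hTbdd hx
    have h2 : sSup {y | ∃ ζ ∈ K,
        y = ‖e m ζ + ∑ i ∈ Finset.range m, cs i * e i ζ‖} ≤
        vanFam e K (m + 1) / V := by
      refine csSup_le ⟨_, hne.choose, hne.choose_spec, rfl⟩ ?_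
      rintro y ⟨ζ, hζK, rfl⟩
      rw [habs ζ]
      have hmem : ‖Matrix.det (A ζ)‖ ≤ vanFam e K (m + 1) := by
        refine le_csSup hSnbdd ⟨Fin.snoc ζs ζ, ?_, rfl⟩
        intro i
        refine Fin.lastCases ?_ ?_ i
        · rw [Fin.snoc_last]; exact hζK
        · intro j; rw [Fin.snoc_castSucc]; exact hζs j
      exact (div_le_div_iff_of_pos_right hpos).mpr hmem
    have := h1.trans h2
    calc chebFam e K (m + 1) * V ≤ (vanFam e K (m + 1) / V) * V := by
          exact mul_le_mul_of_nonneg_right this (le_of_lt hpos)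
      _ = vanFam e K (m + 1) := by field_simp
  refine ⟨hlow, ?_⟩
  -- ===== Upper bound =====
  have hup : vanFam e K (m + 1) ≤ ((m : ℝ) + 1) * chebFam e K (m + 1) * V := by
    refine csSup_le ⟨_, ζn, hζn, rfl⟩ ?_
    rintro x ⟨ζ, hζ, rfl⟩
    set B0 : Matrix (Fin (m + 1)) (Fin (m + 1)) ℂ :=
      Matrix.of fun i j : Fin (m + 1) => e (i : ℕ) (ζ j) with hB0
    have hmain : ∀ s ∈ T, ‖Matrix.det B0‖ ≤ ((m : ℝ) + 1) * s * V := by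
      rintro s ⟨c, rfl⟩
      set p : X → ℂ := fun z => e m z + ∑ i ∈ Finset.range m, c i * e i z with hpdef
      set S : ℝ := sSup {y | ∃ ζ' ∈ K, y = ‖p ζ'‖} with hS
      have hY : BddAbove {y | ∃ ζ' ∈ K, y = ‖p ζ'‖} := cheb_aux hK (hpc c)
      have hs0 : 0 ≤ S :=
        Real.sSup_nonneg (by rintro y ⟨ζ', -, rfl⟩; exact norm_nonneg _)
      set c' : Fin (m + 1) → ℂ := Fin.snoc (fun i : Fin m => c (i : ℕ)) 1 with hc'
      have hrow : (fun j => p (ζ j)) = ∑ k : Fin (m + 1), c' k • B0 k := by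
        funext j
        rw [Finset.sum_apply, Fin.sum_univ_castSucc]
        simp only [Pi.smul_apply, smul_eq_mul, hc', Fin.snoc_last, Fin.snoc_castSucc,
          hB0, Matrix.of_apply, Fin.coe_castSucc, Fin.val_last, one_mul]
        rw [hpdef]
        dsimp only
        rw [← Fin.sum_univ_eq_sum_range (fun i => c i * e i (ζ j)) m]
        exact add_comm _ _
      have hdetB : Matrix.det (B0.updateRow (Fin.last m) fun j => p (ζ j)) = Matrix.det B0 := by
        rw [hrow, Matrix.det_updateRow_sum]
        simp [hc', Fin.snoc_last]
      set B := B0.updateRow (Fin.last m) fun j => p (ζ j) with hB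
      rw [← hdetB, Matrix.det_succ_row B (Fin.last m)]
      refine le_trans (norm_sum_le _ _) ?_
      have hterm : ∀ j : Fin (m + 1),
          ‖(-1 : ℂ) ^ (((Fin.last m : Fin (m + 1)) : ℕ) + (j : ℕ)) * B (Fin.last m) j *
            (B.submatrix (Fin.last m).succAbove j.succAbove).det‖ ≤ S * V := by
        intro j
        rw [norm_mul, norm_mul]
        have h1 : ‖(-1 : ℂ) ^ (((Fin.last m : Fin (m + 1)) : ℕ) + (j : ℕ))‖ = 1 := by
          rw [norm_pow]; simp
        rw [h1, one_mul]
        have h2 : B (Fin.last m) j = p (ζ j) := by rw [hB, Matrix.updateRow_self]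
        have h3 : B.submatrix (Fin.last m).succAbove j.succAbove =
            Matrix.of fun i' j' : Fin m => e (i' : ℕ) ((ζ ∘ j.succAbove) j') := by
          ext i' j'
          rw [Matrix.submatrix_apply, Fin.succAbove_last, hB,
            Matrix.updateRow_ne (Fin.castSucc_lt_last i').ne]
          simp [hB0]
        have h4 : ‖p (ζ j)‖ ≤ S := le_csSup hY ⟨ζ j, hζ j, rfl⟩
        have h5 : ‖(B.submatrix (Fin.last m).succAbove j.succAbove).det‖ ≤ V := by
          rw [h3]
          exact le_csSup hSmbdd ⟨ζ ∘ j.succAbove, fun i' => hζ _, rfl⟩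
        rw [h2]
        exact mul_le_mul h4 h5 (norm_nonneg _) hs0
      calc (∑ j : Fin (m + 1), ‖(-1 : ℂ) ^ (((Fin.last m : Fin (m + 1)) : ℕ) + (j : ℕ)) *
              B (Fin.last m) j * (B.submatrix (Fin.last m).succAbove j.succAbove).det‖)
          ≤ ∑ _j : Fin (m + 1), S * V := Finset.sum_le_sum fun j _ => hterm j
        _ = ((m : ℝ) + 1) * S * V := by
            rw [Finset.sum_const, Finset.card_univ, Fintype.card_fin, nsmul_eq_mul]
            push_cast; ring
    have hden : (0 : ℝ) < ((m : ℝ) + 1) * V := by positivity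
    have h1 : ‖Matrix.det B0‖ / (((m : ℝ) + 1) * V) ≤ chebFam e K (m + 1) := by
      rw [hTcheb]
      refine le_csInf hTne fun s hs => ?_
      rw [div_le_iff₀ hden]
      calc ‖Matrix.det B0‖ ≤ ((m : ℝ) + 1) * s * V := hmain s hs
        _ = s * (((m : ℝ) + 1) * V) := by ring
    have h2 := (div_le_iff₀ hden).mp h1
    calc ‖Matrix.det B0‖ ≤ chebFam e K (m + 1) * (((m : ℝ) + 1) * V) := h2
      _ = ((m : ℝ) + 1) * chebFam e K (m + 1) * V := by ring
  calc vanFam e K (m + 1) ≤ ((m : ℝ) + 1) * chebFam e K (m + 1) * V := hup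
    _ = ((m + 1 : ℕ) : ℝ) * chebFam e K (m + 1) * V := by push_cast; ring

end
end
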